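/- In the signed basis |m̃⟩ = (−1)^{δ(m)}|m⟩ with δ(m) = ∑_j j(S − m_j), all off-diagonal matrix elements of H = J ∑_j S_j·S_{j+1} + K ∑_j (S_j^y)² − H ∑_j S_j^z are nonpositive, provided J ≥ 0 and K ≥ 0: ⟨m̃|H|m̃'⟩ ≤ 0 for all m ≠ m'. -/
import Mathlib


open Matrix Complex

noncomputable section

/-- The spin quantum number `S = twoS/2`. -/
def Sval (twoS : ℕ) : ℝ := (twoS : ℝ) / 2

/-- The `S^z` eigenvalue `m = k − S` of the `k`-th basis vector `|m⟩`. -/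
def mz (twoS : ℕ) (k : Fin (twoS + 1)) : ℝ := (k : ℕ) - Sval twoS

/-- The raising operator `S⁺`, `S⁺|m⟩ = √(S(S+1) − m(m+1))|m+1⟩`. -/
def Sp (twoS : ℕ) : Matrix (Fin (twoS + 1)) (Fin (twoS + 1)) ℂ :=
  fun k' k => if (k' : ℕ) = (k : ℕ) + 1 then
    (Real.sqrt (Sval twoS * (Sval twoS + 1) - mz twoS k * (mz twoS k + 1)) : ℂ) else 0

/-- `S^x = (S⁺ + S⁻)/2`. -/
def SxM (twoS : ℕ) : Matrix (Fin (twoS + 1)) (Fin (twoS + 1)) ℂ :=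
  (1 / 2 : ℂ) • (Sp twoS + (Sp twoS)ᵀ)

/-- `S^y = (S⁻ − S⁺)·(i/2)`. -/
def SyM (twoS : ℕ) : Matrix (Fin (twoS + 1)) (Fin (twoS + 1)) ℂ :=
  (I / 2 : ℂ) • ((Sp twoS)ᵀ - Sp twoS)

/-- `S^z`, diagonal in this basis. -/
def SzM (twoS : ℕ) : Matrix (Fin (twoS + 1)) (Fin (twoS + 1)) ℂ :=
  Matrix.diagonal fun k => (mz twoS k : ℂ)

/-- The one-site operator `A` acting on site `j` of the `L`-site chain. -/
def onSite (L twoS : ℕ) (j : Fin L) (A : Matrix (Fin (twoS + 1)) (Fin (twoS + 1)) ℂ) :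
    Matrix (Fin L → Fin (twoS + 1)) (Fin L → Fin (twoS + 1)) ℂ :=
  fun x y => ∏ k : Fin L, (if k = j then A else 1) (x k) (y k)

/-- The Hamiltonian `H = J ∑_j S_j·S_{j+1} + K ∑_j (S_j^y)² − H ∑_j S_j^z`
with periodic boundary conditions. -/
def Ham (L twoS : ℕ) [NeZero L] (J K Hf : ℝ) :
    Matrix (Fin L → Fin (twoS + 1)) (Fin L → Fin (twoS + 1)) ℂ :=
  (J : ℂ) • (∑ j : Fin L,
      (onSite L twoS j (SxM twoS) * onSite L twoS (j + 1) (SxM twoS)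
        + onSite L twoS j (SyM twoS) * onSite L twoS (j + 1) (SyM twoS)
        + onSite L twoS j (SzM twoS) * onSite L twoS (j + 1) (SzM twoS)))
    + (K : ℂ) • (∑ j : Fin L, onSite L twoS j (SyM twoS) * onSite L twoS j (SyM twoS))
    - (Hf : ℂ) • ∑ j : Fin L, onSite L twoS j (SzM twoS)

/-- The sign exponent `δ(m) = ∑_{j=1}^L j(S − m_j)` of the signed basis, with
`S − m_j = twoS − x_j` in terms of the basis label `x_j ∈ {0,…,2S}`. -/
def deltaExp (L twoS : ℕ) (x : Fin L → Fin (twoS + 1)) : ℕ :=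
  ∑ j : Fin L, ((j : ℕ) + 1) * (twoS - (x j : ℕ))
/- AUX SECTION -/

section AuxHelpers

lemma prod_split' {L : ℕ} {M : Type*} [CommMonoid M] (f : Fin L → M) (j j' : Fin L)
    (h : j ≠ j') (hf : ∀ k, k ≠ j → k ≠ j' → f k = 1) : ∏ k, f k = f j * f j' := by
  rw [← Finset.prod_pair h]
  exact (Finset.prod_subset (Finset.subset_univ _) (by
    intro k _ hk
    simp only [Finset.mem_insert, Finset.mem_singleton, not_or] at hk
    exact hf k hk.1 hk.2)).symm

lemma prod_split_one' {L : ℕ} {M : Type*} [CommMonoid M] (f : Fin L → M) (j : Fin L)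
    (hf : ∀ k, k ≠ j → f k = 1) : ∏ k, f k = f j := by
  rw [← Finset.prod_singleton (f := f) (a := j)]
  exact (Finset.prod_subset (Finset.subset_univ _) (by
    intro k _ hk
    simp only [Finset.mem_singleton] at hk
    exact hf k hk)).symm

lemma sum_split' {L : ℕ} {M : Type*} [AddCommMonoid M] (f : Fin L → M) (j j' : Fin L)
    (h : j ≠ j') (hf : ∀ k, k ≠ j → k ≠ j' → f k = 0) : ∑ k, f k = f j + f j' := by
  rw [← Finset.sum_pair h]
  exact (Finset.sum_subset (Finset.subset_univ _) (by
    intro k _ hk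
    simp only [Finset.mem_insert, Finset.mem_singleton, not_or] at hk
    exact hf k hk.1 hk.2)).symm

lemma sum_split_one' {L : ℕ} {M : Type*} [AddCommMonoid M] (f : Fin L → M) (j : Fin L)
    (hf : ∀ k, k ≠ j → f k = 0) : ∑ k, f k = f j := by
  rw [← Finset.sum_singleton f j]
  exact (Finset.sum_subset (Finset.subset_univ _) (by
    intro k _ hk
    simp only [Finset.mem_singleton] at hk
    exact hf k hk)).symm

lemma two_zmod' : (2 : ZMod 2) = 0 := rfl

lemma cast_sub_two' (a b : ℕ) (h : b ≤ a) :
    ((a - b : ℕ) : ZMod 2) = (a : ZMod 2) + (b : ZMod 2) := by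
  have h1 : (a - b) + b = a := Nat.sub_add_cancel h
  have h2 := congrArg (Nat.cast (R := ZMod 2)) h1
  push_cast at h2
  have h3 : ((b : ZMod 2)) + (b : ZMod 2) = 0 := CharTwo.add_self_eq_zero _
  linear_combination h2 - h3

lemma odd_cast' {n : ℕ} (h : Odd n) : ((n : ℕ) : ZMod 2) = 1 := by
  rw [← ZMod.natCast_mod, Nat.odd_iff.mp h]; norm_num

lemma even_cast' {n : ℕ} (h : Even n) : ((n : ℕ) : ZMod 2) = 0 := by
  rw [← ZMod.natCast_mod, Nat.even_iff.mp h]; norm_num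

lemma odd_of_cast' {n : ℕ} (h : ((n : ℕ) : ZMod 2) = 1) : Odd n := by
  rw [Nat.odd_iff, ← ZMod.val_natCast, h]; rfl

lemma even_of_cast' {n : ℕ} (h : ((n : ℕ) : ZMod 2) = 0) : Even n := by
  rw [Nat.even_iff, ← ZMod.val_natCast, h]; rfl

lemma mod_even_cast' (n L : ℕ) (hL : Even L) : ((n % L : ℕ) : ZMod 2) = (n : ZMod 2) := by
  have h1 := Nat.div_add_mod n L
  have h2 := congrArg (Nat.cast (R := ZMod 2)) h1
  push_cast at h2
  have hL0 : ((L : ℕ) : ZMod 2) = 0 :=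
    (ZMod.natCast_eq_zero_iff L 2).mpr hL.two_dvd
  rw [hL0] at h2
  linear_combination h2

lemma parity_key' {L twoS : ℕ} (x y : Fin L → Fin (twoS+1)) :
    ((deltaExp L twoS x + deltaExp L twoS y : ℕ) : ZMod 2)
      = ∑ k : Fin L, (((k : ℕ) : ZMod 2) + 1) * (((x k : ℕ) + (y k : ℕ) : ℕ) : ZMod 2) := by
  unfold deltaExp
  rw [← Finset.sum_add_distrib, Nat.cast_sum]
  refine Finset.sum_congr rfl fun k _ => ?_
  have hx : (x k : ℕ) ≤ twoS := Nat.lt_succ_iff.mp (x k).isLt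
  have hy : (y k : ℕ) ≤ twoS := Nat.lt_succ_iff.mp (y k).isLt
  push_cast
  rw [cast_sub_two' _ _ hx, cast_sub_two' _ _ hy]
  linear_combination (((k:ℕ) : ZMod 2) + 1) * ((twoS : ℕ) : ZMod 2) * two_zmod'

lemma hL2_of (L : ℕ) [NeZero L] (hLeven : Even L) : 2 ≤ L := by
  rcases hLeven with ⟨m, hm⟩
  have := NeZero.ne L
  omega

lemma fin_succ_ne' {L : ℕ} [NeZero L] (hL2 : 2 ≤ L) (j : Fin L) : j ≠ j + 1 := by
  intro h
  have h1 : ((1 : Fin L) : ℕ) = 1 := by rw [Fin.val_one']; exact Nat.mod_eq_of_lt hL2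
  have h2 := congrArg Fin.val h
  rw [Fin.val_add, h1] at h2
  have := j.isLt
  rcases Nat.lt_or_ge (j.val + 1) L with hlt | hge
  · rw [Nat.mod_eq_of_lt hlt] at h2; omega
  · have hEq : j.val + 1 = L := by omega
    rw [hEq, Nat.mod_self] at h2
    omega

lemma parity_bond' {L twoS : ℕ} [NeZero L] (hLeven : Even L) (x y : Fin L → Fin (twoS+1))
    (j : Fin L) (hoff : ∀ k, k ≠ j → k ≠ j + 1 → x k = y k)
    (hj : Odd ((x j : ℕ) + (y j : ℕ))) (hj1 : Odd ((x (j+1) : ℕ) + (y (j+1) : ℕ))) :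
    Odd (deltaExp L twoS x + deltaExp L twoS y) := by
  have hL2 : 2 ≤ L := hL2_of L hLeven
  have hne : j ≠ j + 1 := fin_succ_ne' hL2 j
  apply odd_of_cast'
  rw [parity_key', sum_split' _ j (j+1) hne (fun k hk hk' => by
    rw [hoff k hk hk']
    have h2 : ((y k : ℕ) + (y k : ℕ) : ℕ) = 2 * (y k : ℕ) := by ring
    rw [h2]
    push_cast
    rw [two_zmod']; ring)]
  rw [odd_cast' hj, odd_cast' hj1]
  have hv : (((j + 1 : Fin L) : ℕ) : ZMod 2) = ((j : ℕ) : ZMod 2) + 1 := by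
    rw [Fin.val_add]
    have h1 : ((1 : Fin L) : ℕ) = 1 := by rw [Fin.val_one']; exact Nat.mod_eq_of_lt hL2
    rw [h1, mod_even_cast' _ _ hLeven]
    push_cast; ring
  rw [hv]
  linear_combination (((j : ℕ) : ZMod 2) + 1) * two_zmod'

lemma parity_site' {L twoS : ℕ} (x y : Fin L → Fin (twoS+1)) (j : Fin L)
    (hoff : ∀ k, k ≠ j → x k = y k) (hj : Even ((x j : ℕ) + (y j : ℕ))) :
    Even (deltaExp L twoS x + deltaExp L twoS y) := by
  apply even_of_cast'
  rw [parity_key', sum_split_one' _ j (fun k hk => by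
    rw [hoff k hk]
    have h2 : ((y k : ℕ) + (y k : ℕ) : ℕ) = 2 * (y k : ℕ) := by ring
    rw [h2]
    push_cast
    rw [two_zmod']; ring)]
  rw [even_cast' hj, mul_zero]

/- scalar lemmas -/

def spr (twoS : ℕ) (a b : Fin (twoS+1)) : ℝ :=
  if (a : ℕ) = (b : ℕ) + 1 then
    Real.sqrt (Sval twoS * (Sval twoS + 1) - mz twoS b * (mz twoS b + 1)) else 0

lemma spr_nonneg {twoS : ℕ} (a b : Fin (twoS+1)) : 0 ≤ spr twoS a b := by
  unfold spr; split; exacts [Real.sqrt_nonneg _, le_rfl]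

lemma Sp_eq {twoS : ℕ} (a b : Fin (twoS+1)) : Sp twoS a b = ((spr twoS a b : ℝ) : ℂ) := by
  unfold Sp spr; split <;> simp

lemma spr_eq_zero {twoS : ℕ} (a b : Fin (twoS+1)) (h : (a:ℕ) ≠ (b:ℕ)+1) :
    spr twoS a b = 0 := if_neg h

lemma bond_scalar {twoS : ℕ} (a b c d : Fin (twoS+1)) :
    SxM twoS a b * SxM twoS c d + SyM twoS a b * SyM twoS c d
      = (1/2 : ℂ) * (Sp twoS a b * Sp twoS d c + Sp twoS b a * Sp twoS c d) := by
  simp only [SxM, SyM, Matrix.smul_apply, Matrix.add_apply, Matrix.sub_apply,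
    Matrix.transpose_apply, smul_eq_mul]
  linear_combination ((1/4 : ℂ) * (Sp twoS b a - Sp twoS a b)
    * (Sp twoS d c - Sp twoS c d)) * Complex.I_mul_I

lemma spr_cross1 {twoS : ℕ} (a b c : Fin (twoS+1)) (hab : a ≠ b) :
    spr twoS c a * spr twoS c b = 0 := by
  unfold spr
  split_ifs with h1 h2
  · exact absurd (Fin.val_injective (by omega : (a:ℕ) = (b:ℕ))) hab
  all_goals ring

lemma spr_cross2 {twoS : ℕ} (a b c : Fin (twoS+1)) (hab : a ≠ b) :
    spr twoS a c * spr twoS b c = 0 := by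
  unfold spr
  split_ifs with h1 h2
  · exact absurd (Fin.val_injective (by omega : (a:ℕ) = (b:ℕ))) hab
  all_goals ring

lemma sy_sq_summand {twoS : ℕ} (a b c : Fin (twoS+1)) (hab : a ≠ b) :
    SyM twoS a c * SyM twoS c b
      = -((((1/4 : ℝ) * (spr twoS c a * spr twoS b c + spr twoS a c * spr twoS c b)) : ℝ) : ℂ) := by
  have h1 : spr twoS c a * spr twoS c b = 0 := spr_cross1 a b c hab
  have h2 : spr twoS a c * spr twoS b c = 0 := spr_cross2 a b c hab
  have h1c : ((spr twoS c a : ℝ) : ℂ) * ((spr twoS c b : ℝ) : ℂ) = 0 := by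
    rw [← Complex.ofReal_mul, h1, Complex.ofReal_zero]
  have h2c : ((spr twoS a c : ℝ) : ℂ) * ((spr twoS b c : ℝ) : ℂ) = 0 := by
    rw [← Complex.ofReal_mul, h2, Complex.ofReal_zero]
  simp only [SyM, Matrix.smul_apply, Matrix.sub_apply, Matrix.transpose_apply, smul_eq_mul,
    Sp_eq]
  push_cast
  linear_combination ((1/4 : ℂ) * (((spr twoS c a : ℝ) : ℂ) - ((spr twoS a c : ℝ) : ℂ))
      * (((spr twoS b c : ℝ) : ℂ) - ((spr twoS c b : ℝ) : ℂ))) * Complex.I_mul_I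
    + (1/4 : ℂ) * h1c + (1/4 : ℂ) * h2c

/- onSite lemmas -/

lemma onSite_mul_apply {L twoS : ℕ} (j j' : Fin L)
    (A B : Matrix (Fin (twoS+1)) (Fin (twoS+1)) ℂ) (x y : Fin L → Fin (twoS+1)) :
    (onSite L twoS j A * onSite L twoS j' B) x y
      = ∏ k : Fin L, (((if k = j then A else 1) * (if k = j' then B else 1)) (x k) (y k)) := by
  rw [Matrix.mul_apply]
  simp only [onSite, Matrix.mul_apply]
  rw [Fintype.prod_sum
    (fun k i => (if k = j then A else 1) (x k) i * (if k = j' then B else 1) i (y k))]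
  simp [Finset.prod_mul_distrib]

lemma offsite_zero {L twoS : ℕ} (j j' : Fin L)
    (A B : Matrix (Fin (twoS+1)) (Fin (twoS+1)) ℂ) (x y : Fin L → Fin (twoS+1)) (k0 : Fin L)
    (h1 : k0 ≠ j) (h2 : k0 ≠ j') (h3 : x k0 ≠ y k0) :
    (onSite L twoS j A * onSite L twoS j' B) x y = 0 := by
  rw [onSite_mul_apply]
  apply Finset.prod_eq_zero (Finset.mem_univ k0)
  rw [if_neg h1, if_neg h2, one_mul]
  exact Matrix.one_apply_ne h3

lemma onSite_pair {L twoS : ℕ} (j j' : Fin L) (hne : j ≠ j')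
    (A B : Matrix (Fin (twoS+1)) (Fin (twoS+1)) ℂ) (x y : Fin L → Fin (twoS+1))
    (hoff : ∀ k, k ≠ j → k ≠ j' → x k = y k) :
    (onSite L twoS j A * onSite L twoS j' B) x y = A (x j) (y j) * B (x j') (y j') := by
  rw [onSite_mul_apply, prod_split' _ j j' hne (fun k hk hk' => by
    rw [if_neg hk, if_neg hk', one_mul, hoff k hk hk']
    exact Matrix.one_apply_eq _)]
  rw [if_pos rfl, if_neg hne, if_pos rfl, if_neg (Ne.symm hne), mul_one, one_mul]

lemma onSite_same {L twoS : ℕ} (j : Fin L)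
    (A : Matrix (Fin (twoS+1)) (Fin (twoS+1)) ℂ) (x y : Fin L → Fin (twoS+1))
    (hoff : ∀ k, k ≠ j → x k = y k) :
    (onSite L twoS j A * onSite L twoS j A) x y = (A * A) (x j) (y j) := by
  rw [onSite_mul_apply, prod_split_one' _ j (fun k hk => by
    rw [if_neg hk, one_mul, hoff k hk]
    exact Matrix.one_apply_eq _)]
  rw [if_pos rfl]

lemma zterm {L twoS : ℕ} (j : Fin L) (x y : Fin L → Fin (twoS+1)) (hxy : x ≠ y) :
    onSite L twoS j (SzM twoS) x y = 0 := by
  obtain ⟨k0, hk0⟩ := Function.ne_iff.mp hxy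
  apply Finset.prod_eq_zero (Finset.mem_univ k0)
  by_cases h : k0 = j
  · subst h
    rw [if_pos rfl]
    exact Matrix.diagonal_apply_ne _ hk0
  · rw [if_neg h]
    exact Matrix.one_apply_ne hk0

end AuxHelpers
section MainLemmas

lemma bond_exists {L twoS : ℕ} [NeZero L] (hLeven : Even L)
    (x y : Fin L → Fin (twoS+1)) (hxy : x ≠ y) (j : Fin L) :
    ∃ r : ℝ, 0 ≤ r ∧
      (-1 : ℂ) ^ (deltaExp L twoS x + deltaExp L twoS y) *
        ((onSite L twoS j (SxM twoS) * onSite L twoS (j+1) (SxM twoS)) x y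
          + (onSite L twoS j (SyM twoS) * onSite L twoS (j+1) (SyM twoS)) x y
          + (onSite L twoS j (SzM twoS) * onSite L twoS (j+1) (SzM twoS)) x y) = -(r : ℂ) := by
  have hne : j ≠ j + 1 := fin_succ_ne' (hL2_of L hLeven) j
  by_cases hoff : ∀ k, k ≠ j → k ≠ j + 1 → x k = y k
  · rw [onSite_pair j (j+1) hne _ _ x y hoff, onSite_pair j (j+1) hne _ _ x y hoff,
      onSite_pair j (j+1) hne _ _ x y hoff]
    have habcd : x j ≠ y j ∨ x (j+1) ≠ y (j+1) := by
      by_contra h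
      push_neg at h
      refine hxy (funext fun k => ?_)
      by_cases h1 : k = j
      · subst h1; exact h.1
      · by_cases h2 : k = j + 1
        · subst h2; exact h.2
        · exact hoff k h1 h2
    have hz : SzM twoS (x j) (y j) * SzM twoS (x (j+1)) (y (j+1)) = 0 := by
      rcases habcd with h | h
      · have : SzM twoS (x j) (y j) = 0 := Matrix.diagonal_apply_ne _ h
        rw [this, zero_mul]
      · have : SzM twoS (x (j+1)) (y (j+1)) = 0 := Matrix.diagonal_apply_ne _ h
        rw [this, mul_zero]
    rw [hz, add_zero, bond_scalar, Sp_eq (x j) (y j), Sp_eq (y j) (x j),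
      Sp_eq (x (j+1)) (y (j+1)), Sp_eq (y (j+1)) (x (j+1))]
    by_cases h1 : (x j : ℕ) = (y j : ℕ) + 1 ∧ (y (j+1) : ℕ) = (x (j+1) : ℕ) + 1
    · refine ⟨1/2 * (spr twoS (x j) (y j) * spr twoS (y (j+1)) (x (j+1))),
        by have := spr_nonneg (x j) (y j); have := spr_nonneg (y (j+1)) (x (j+1)); positivity, ?_⟩
      have hodd : Odd (deltaExp L twoS x + deltaExp L twoS y) :=
        parity_bond' hLeven x y j hoff (by rw [Nat.odd_iff]; omega) (by rw [Nat.odd_iff]; omega)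
      rw [Odd.neg_one_pow hodd, spr_eq_zero (y j) (x j) (by omega),
        spr_eq_zero (x (j+1)) (y (j+1)) (by omega)]
      push_cast
      ring
    · by_cases h2 : (y j : ℕ) = (x j : ℕ) + 1 ∧ (x (j+1) : ℕ) = (y (j+1) : ℕ) + 1
      · refine ⟨1/2 * (spr twoS (y j) (x j) * spr twoS (x (j+1)) (y (j+1))),
          by have := spr_nonneg (y j) (x j); have := spr_nonneg (x (j+1)) (y (j+1)); positivity, ?_⟩
        have hodd : Odd (deltaExp L twoS x + deltaExp L twoS y) :=
          parity_bond' hLeven x y j hoff (by rw [Nat.odd_iff]; omega) (by rw [Nat.odd_iff]; omega)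
        rw [Odd.neg_one_pow hodd, spr_eq_zero (x j) (y j) (by omega),
          spr_eq_zero (y (j+1)) (x (j+1)) (by omega)]
        push_cast
        ring
      · refine ⟨0, le_rfl, ?_⟩
        have e1 : spr twoS (x j) (y j) * spr twoS (y (j+1)) (x (j+1)) = 0 := by
          rcases not_and_or.mp h1 with h | h
          · rw [spr_eq_zero _ _ h, zero_mul]
          · rw [spr_eq_zero _ _ h, mul_zero]
        have e2 : spr twoS (y j) (x j) * spr twoS (x (j+1)) (y (j+1)) = 0 := by
          rcases not_and_or.mp h2 with h | h
          · rw [spr_eq_zero _ _ h, zero_mul]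
          · rw [spr_eq_zero _ _ h, mul_zero]
        have e1c : ((spr twoS (x j) (y j) : ℝ) : ℂ) * ((spr twoS (y (j+1)) (x (j+1)) : ℝ) : ℂ) = 0 := by
          rw [← Complex.ofReal_mul, e1, Complex.ofReal_zero]
        have e2c : ((spr twoS (y j) (x j) : ℝ) : ℂ) * ((spr twoS (x (j+1)) (y (j+1)) : ℝ) : ℂ) = 0 := by
          rw [← Complex.ofReal_mul, e2, Complex.ofReal_zero]
        push_cast
        linear_combination
          ((-1 : ℂ) ^ (deltaExp L twoS x + deltaExp L twoS y) * (1/2 : ℂ)) * e1c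
          + ((-1 : ℂ) ^ (deltaExp L twoS x + deltaExp L twoS y) * (1/2 : ℂ)) * e2c
  · push_neg at hoff
    obtain ⟨k0, hk1, hk2, hk3⟩ := hoff
    refine ⟨0, le_rfl, ?_⟩
    rw [offsite_zero j (j+1) _ _ x y k0 hk1 hk2 hk3,
      offsite_zero j (j+1) _ _ x y k0 hk1 hk2 hk3,
      offsite_zero j (j+1) _ _ x y k0 hk1 hk2 hk3]
    simp

lemma kterm_exists {L twoS : ℕ} (x y : Fin L → Fin (twoS+1)) (hxy : x ≠ y) (j : Fin L) :
    ∃ r : ℝ, 0 ≤ r ∧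
      (-1 : ℂ) ^ (deltaExp L twoS x + deltaExp L twoS y) *
        ((onSite L twoS j (SyM twoS) * onSite L twoS j (SyM twoS)) x y) = -(r : ℂ) := by
  by_cases hoff : ∀ k, k ≠ j → x k = y k
  · have hab : x j ≠ y j := by
      intro h
      exact hxy (funext fun k => by
        by_cases hk : k = j
        · subst hk; exact h
        · exact hoff k hk)
    rw [onSite_same j _ x y hoff, Matrix.mul_apply]
    have hsum : (∑ c, SyM twoS (x j) c * SyM twoS c (y j))
        = -(((∑ c, (1/4 : ℝ) * (spr twoS c (x j) * spr twoS (y j) c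
            + spr twoS (x j) c * spr twoS c (y j))) : ℝ) : ℂ) := by
      rw [Finset.sum_congr rfl (fun c _ => sy_sq_summand (x j) (y j) c hab)]
      rw [Complex.ofReal_sum, ← Finset.sum_neg_distrib]
    rw [hsum]
    by_cases hpar : Even ((x j : ℕ) + (y j : ℕ))
    · refine ⟨∑ c, (1/4 : ℝ) * (spr twoS c (x j) * spr twoS (y j) c
          + spr twoS (x j) c * spr twoS c (y j)),
        Finset.sum_nonneg (fun c _ => by
          have := spr_nonneg c (x j); have := spr_nonneg (y j) c
          have := spr_nonneg (x j) c; have := spr_nonneg c (y j)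
          positivity), ?_⟩
      rw [Even.neg_one_pow (parity_site' x y j hoff hpar), one_mul]
    · refine ⟨0, le_rfl, ?_⟩
      have hq0 : ∀ c : Fin (twoS+1), (1/4 : ℝ) * (spr twoS c (x j) * spr twoS (y j) c
          + spr twoS (x j) c * spr twoS c (y j)) = 0 := by
        intro c
        have o1 : spr twoS c (x j) * spr twoS (y j) c = 0 := by
          unfold spr
          split_ifs with u v
          · exact absurd (by rw [Nat.even_iff]; omega) hpar
          all_goals ring
        have o2 : spr twoS (x j) c * spr twoS c (y j) = 0 := by
          unfold spr
          split_ifs with u v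
          · exact absurd (by rw [Nat.even_iff]; omega) hpar
          all_goals ring
        rw [o1, o2]; ring
      rw [Finset.sum_congr rfl (fun c _ => hq0 c)]
      simp
  · push_neg at hoff
    obtain ⟨k0, hk1, hk3⟩ := hoff
    refine ⟨0, le_rfl, ?_⟩
    rw [offsite_zero j j _ _ x y k0 hk1 hk1 hk3]
    simp

end MainLemmas
/-- in the signed basis `|m̃⟩ = (−1)^{δ(m)}|m⟩`, all off-diagonal
matrix elements of `H = J ∑_j S_j·S_{j+1} + K ∑_j (S_j^y)² − H ∑_j S_j^z` are real
and nonpositive, provided `J ≥ 0` and `K ≥ 0`. -/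
theorem signed_basis_nonpositive (L twoS : ℕ) [NeZero L] (hLeven : Even L)
    (J K Hf : ℝ) (hJ : 0 ≤ J) (hK : 0 ≤ K)
    (x y : Fin L → Fin (twoS + 1)) (hxy : x ≠ y) :
    ((-1 : ℂ) ^ (deltaExp L twoS x + deltaExp L twoS y) * Ham L twoS J K Hf x y).re ≤ 0
      ∧ ((-1 : ℂ) ^ (deltaExp L twoS x + deltaExp L twoS y)
          * Ham L twoS J K Hf x y).im = 0 := by
  choose rb hrb hrb2 using fun j => bond_exists hLeven x y hxy j
  choose rk hrk hrk2 using fun j => kterm_exists x y hxy j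
  have hH : Ham L twoS J K Hf x y
      = (J : ℂ) * ∑ j : Fin L,
          ((onSite L twoS j (SxM twoS) * onSite L twoS (j+1) (SxM twoS)) x y
            + (onSite L twoS j (SyM twoS) * onSite L twoS (j+1) (SyM twoS)) x y
            + (onSite L twoS j (SzM twoS) * onSite L twoS (j+1) (SzM twoS)) x y)
        + (K : ℂ) * ∑ j : Fin L, (onSite L twoS j (SyM twoS) * onSite L twoS j (SyM twoS)) x y
        - (Hf : ℂ) * ∑ j : Fin L, onSite L twoS j (SzM twoS) x y := by
    simp [Ham, Matrix.sum_apply, Matrix.add_apply, Matrix.sub_apply, Matrix.smul_apply,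
      smul_eq_mul]
  have hz' : (∑ j : Fin L, onSite L twoS j (SzM twoS) x y) = 0 := by
    rw [Finset.sum_congr rfl (fun j _ => zterm j x y hxy)]
    simp
  have key : (-1 : ℂ) ^ (deltaExp L twoS x + deltaExp L twoS y) * Ham L twoS J K Hf x y
      = ((-(J * (∑ j : Fin L, rb j) + K * (∑ j : Fin L, rk j)) : ℝ) : ℂ) := by
    rw [hH, hz', mul_zero, sub_zero]
    have ha : (-1 : ℂ) ^ (deltaExp L twoS x + deltaExp L twoS y) * (∑ j : Fin L,
          ((onSite L twoS j (SxM twoS) * onSite L twoS (j+1) (SxM twoS)) x y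
            + (onSite L twoS j (SyM twoS) * onSite L twoS (j+1) (SyM twoS)) x y
            + (onSite L twoS j (SzM twoS) * onSite L twoS (j+1) (SzM twoS)) x y))
        = -(∑ j : Fin L, ((rb j : ℝ) : ℂ)) := by
      rw [Finset.mul_sum, Finset.sum_congr rfl (fun j _ => hrb2 j), Finset.sum_neg_distrib]
    have hb : (-1 : ℂ) ^ (deltaExp L twoS x + deltaExp L twoS y) * (∑ j : Fin L,
          (onSite L twoS j (SyM twoS) * onSite L twoS j (SyM twoS)) x y)
        = -(∑ j : Fin L, ((rk j : ℝ) : ℂ)) := by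
      rw [Finset.mul_sum, Finset.sum_congr rfl (fun j _ => hrk2 j), Finset.sum_neg_distrib]
    push_cast
    linear_combination (J : ℂ) * ha + (K : ℂ) * hb
  rw [key]
  have h1 : 0 ≤ J * ∑ j : Fin L, rb j :=
    mul_nonneg hJ (Finset.sum_nonneg fun j _ => hrb j)
  have h2 : 0 ≤ K * ∑ j : Fin L, rk j :=
    mul_nonneg hK (Finset.sum_nonneg fun j _ => hrk j)
  constructor
  · rw [Complex.ofReal_re]
    linarith
  · rw [Complex.ofReal_im]

end
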